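/- Let S be a commutative ring with identity, R a unitary subring of S, and I, J ideals of S. If I ⊊ J ⊆ (R + I :_S S), then (I :_R (I :_S J)) ⊄ I. In particular, I is an R-conductor ideal of S if and only if (I :_R (I :_S (R + I :_S S))) ⊆ I. -/

import Mathlib

/-- The conductor `(A :_S S) = {x ∈ S | x * S ⊆ A}` of an additive subgroup `A` of `S`,
as an ideal of `S`. -/
def condIdeal {S : Type*} [CommRing S] (A : AddSubgroup S) : Ideal S where
  carrier := {x : S | ∀ s : S, x * s ∈ A}
  add_mem' := by
    intro x y hx hy s
    simpa [add_mul] using A.add_mem (hx s) (hy s)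
  zero_mem' := by
    intro s
    simpa using A.zero_mem
  smul_mem' := by
    intro c x hx s
    have := hx (c * s)
    simpa [smul_eq_mul, mul_assoc, mul_comm, mul_left_comm] using this

/-- `R + I = {r + a | r ∈ R, a ∈ I}` as an additive subgroup of `S`. -/
def addSub {S : Type*} [CommRing S] (R : Subring S) (I : Ideal S) : AddSubgroup S where
  carrier := {x : S | ∃ r ∈ R, ∃ a ∈ I, x = r + a}
  zero_mem' := ⟨0, R.zero_mem, 0, I.zero_mem, by simp⟩
  add_mem' := by
    rintro x y ⟨r, hr, a, ha, rfl⟩ ⟨r', hr', a', ha', rfl⟩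
    exact ⟨r + r', R.add_mem hr hr', a + a', I.add_mem ha ha', by ring⟩
  neg_mem' := by
    rintro x ⟨r, hr, a, ha, rfl⟩
    exact ⟨-r, R.neg_mem hr, -a, I.neg_mem ha, by ring⟩

/-- `I` is an `R`-conductor ideal of `S` if `I = (V :_S S)` for some intermediate ring
`R ⊆ V ⊆ S`. -/
def IsConductorIdeal {S : Type*} [CommRing S] (R : Subring S) (I : Ideal S) : Prop :=
  ∃ V : Subring S, R ≤ V ∧ I = condIdeal V.toAddSubgroup

lemma mem_condIdeal {S : Type*} [CommRing S] (A : AddSubgroup S) (x : S) :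
    x ∈ condIdeal A ↔ ∀ s : S, x * s ∈ A := Iff.rfl

/-- `R + I` as a subring of `S`. -/
def ringOf {S : Type*} [CommRing S] (R : Subring S) (I : Ideal S) : Subring S where
  carrier := {x : S | ∃ r ∈ R, ∃ a ∈ I, x = r + a}
  zero_mem' := ⟨0, R.zero_mem, 0, I.zero_mem, by simp⟩
  one_mem' := ⟨1, R.one_mem, 0, I.zero_mem, by ring⟩
  add_mem' := by
    rintro x y ⟨r, hr, a, ha, rfl⟩ ⟨r', hr', a', ha', rfl⟩
    exact ⟨r + r', R.add_mem hr hr', a + a', I.add_mem ha ha', by ring⟩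
  neg_mem' := by
    rintro x ⟨r, hr, a, ha, rfl⟩
    exact ⟨-r, R.neg_mem hr, -a, I.neg_mem ha, by ring⟩
  mul_mem' := by
    rintro x y ⟨r, hr, a, ha, rfl⟩ ⟨r', hr', a', ha', rfl⟩
    exact ⟨r * r', R.mul_mem hr hr',
      r * a' + a * r' + a * a',
      I.add_mem (I.add_mem (I.mul_mem_left r ha') (I.mul_mem_right r' ha))
        (I.mul_mem_left a ha'), by ring⟩

/-- If `I ⊊ J ⊆ (R + I :_S S)`, then `(I :_R (I :_S J)) ⊄ I`. In particular, `I` is an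
`R`-conductor ideal of `S` if and only if `(I :_R (I :_S (R + I :_S S))) ⊆ I`. -/
theorem stmt_1 {S : Type*} [CommRing S] (R : Subring S) (I : Ideal S) :
    (∀ J : Ideal S, I < J → J ≤ condIdeal (addSub R I) →
      ¬ ({x : S | x ∈ R ∧ ∀ y ∈ {z : S | ∀ j ∈ J, z * j ∈ I}, x * y ∈ I} ⊆ (I : Set S))) ∧
    (IsConductorIdeal R I ↔
      {x : S | x ∈ R ∧ ∀ y ∈ {z : S | ∀ w ∈ condIdeal (addSub R I), z * w ∈ I}, x * y ∈ I}
        ⊆ (I : Set S)) := by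
  have hIC : I ≤ condIdeal (addSub R I) := by
    intro a ha s
    exact ⟨0, R.zero_mem, a * s, I.mul_mem_right s ha, by ring⟩
  have part1 : ∀ J : Ideal S, I < J → J ≤ condIdeal (addSub R I) →
      ¬ ({x : S | x ∈ R ∧ ∀ y ∈ {z : S | ∀ j ∈ J, z * j ∈ I}, x * y ∈ I} ⊆ (I : Set S)) := by
    intro J hIJ hJC hsub
    obtain ⟨j, hjJ, hjI⟩ := SetLike.exists_of_lt hIJ
    obtain ⟨r, hrR, a, haI, heq⟩ := (mem_condIdeal _ _).mp (hJC hjJ) 1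
    rw [mul_one] at heq
    have hrJ : r ∈ J := by
      have : r = j - a := by rw [heq]; ring
      rw [this]
      exact J.sub_mem hjJ (hIJ.le haI)
    have hrI : r ∉ I := fun h => hjI (heq ▸ I.add_mem h haI)
    apply hrI
    apply hsub
    refine ⟨hrR, fun y hy => ?_⟩
    rw [mul_comm]
    exact hy r hrJ
  refine ⟨part1, ?_, ?_⟩
  · rintro ⟨V, hRV, hIV⟩ x ⟨hxR, hx⟩
    have h1 : ∀ w ∈ condIdeal (addSub R I), (1 : S) * w ∈ I := by
      intro w hw
      rw [one_mul, hIV]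
      intro s
      obtain ⟨r, hr, a, ha, heq⟩ := hw s
      rw [heq]
      refine V.toAddSubgroup.add_mem (hRV hr) ?_
      have haV : a ∈ condIdeal V.toAddSubgroup := by rw [← hIV]; exact ha
      simpa using haV 1
    simpa using hx 1 h1
  · intro hsub
    have hCI : condIdeal (addSub R I) ≤ I := by
      by_contra hc
      exact part1 _ (lt_of_le_not_ge hIC hc) le_rfl hsub
    refine ⟨ringOf R I, fun r hr => ⟨r, hr, 0, I.zero_mem, by ring⟩, ?_⟩
    ext x
    constructor
    · intro hx s
      exact ⟨0, R.zero_mem, x * s, I.mul_mem_right s hx, by ring⟩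
    · intro hx
      exact hCI (fun s => hx s)
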